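/- Let g ∈ L¹(ℝ) ∩ L²(ℝ) with g(x) ≥ 0 almost everywhere and M = ∫_{-∞}^{∞} g(x) dx > 0. Define K(u) = -(1/(M√(2π))) ∫_{-∞}^{∞} g(x) e^{-iux} dx and N(u) = K(u)/(1 - √(2π) K(u)). Then 1 - √(2π) K(u) ≠ 0 for every u ∈ ℝ, the function N is bounded on ℝ, and N ∈ L²(ℝ). -/

import Mathlib

open MeasureTheory Filter Real Complex

open scoped FourierTransform

noncomputable section CPAux

variable {g : ℝ → ℝ}

/-- integrability of the Fourier integrand -/
lemma cp_integrand_integrable (hg1 : Integrable g) (u : ℝ) :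
    Integrable (fun x : ℝ => (g x : ℂ) * Complex.exp (-(Complex.I * u * x))) := by
  have hm : AEStronglyMeasurable
      (fun x : ℝ => (g x : ℂ) * Complex.exp (-(Complex.I * u * x))) volume := by
    refine (Complex.continuous_ofReal.comp_aestronglyMeasurable
      hg1.aestronglyMeasurable).mul ?_
    exact (Complex.continuous_exp.comp (by continuity)).aestronglyMeasurable
  refine hg1.norm.mono' hm (Filter.Eventually.of_forall fun x => ?_)
  have : ‖Complex.exp (-(Complex.I * u * x))‖ = 1 := by
    rw [Complex.norm_exp]
    simp
  simp [this, abs_mul]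

lemma cp_norm_w_le (hg1 : Integrable g) (u : ℝ) :
    ‖∫ x : ℝ, (g x : ℂ) * Complex.exp (-(Complex.I * u * x))‖ ≤ ∫ x : ℝ, |g x| := by
  refine (norm_integral_le_integral_norm _).trans ?_
  apply le_of_eq
  congr 1
  funext x
  have : ‖Complex.exp (-(Complex.I * u * x))‖ = 1 := by
    rw [Complex.norm_exp]; simp
  simp [abs_mul, this]

lemma cp_w_continuous (hg1 : Integrable g) :
    Continuous (fun u : ℝ => ∫ x : ℝ, (g x : ℂ) * Complex.exp (-(Complex.I * u * x))) := by
  apply continuous_of_dominated (bound := fun x => |g x|)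
  · exact fun u => (cp_integrand_integrable hg1 u).aestronglyMeasurable
  · intro u
    refine Filter.Eventually.of_forall fun x => ?_
    have : ‖Complex.exp (-(Complex.I * u * x))‖ = 1 := by
      rw [Complex.norm_exp]; simp
    simp [abs_mul, this]
  · exact hg1.norm
  · refine Filter.Eventually.of_forall fun x => ?_
    continuity

lemma cp_w_eq_fourier (g : ℝ → ℝ) (u : ℝ) :
    (∫ x : ℝ, (g x : ℂ) * Complex.exp (-(Complex.I * u * x)))
      = 𝓕 (fun x : ℝ => (g x : ℂ)) (u / (2 * π)) := by
  rw [Real.fourier_real_eq_integral_exp_smul]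
  congr 1
  funext v
  rw [smul_eq_mul, mul_comm]
  congr 1
  have h : (-2 * π * v * (u / (2 * π)) : ℝ) = -(u * v) := by
    field_simp
  rw [h]
  push_cast
  ring_nf

lemma cp_w_tendsto (hg1 : Integrable g) :
    Tendsto (fun u : ℝ => ∫ x : ℝ, (g x : ℂ) * Complex.exp (-(Complex.I * u * x)))
      (cocompact ℝ) (nhds 0) := by
  have h1 : Tendsto (fun u : ℝ => u / (2 * π)) (cocompact ℝ) (cocompact ℝ) := by
    rw [cocompact_eq_atBot_atTop]
    apply tendsto_sup.2
    constructor
    · exact Tendsto.mono_right (tendsto_id.atBot_div_const (by positivity)) le_sup_left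
    · exact Tendsto.mono_right (tendsto_id.atTop_div_const (by positivity)) le_sup_right
  have := (Real.zero_at_infty_fourier (fun x : ℝ => (g x : ℂ))).comp h1
  refine Tendsto.congr (fun u => ?_) this
  exact (cp_w_eq_fourier g u).symm


variable {g : ℝ → ℝ}

lemma cp_gcos_integrable (hg1 : Integrable g) (u : ℝ) :
    Integrable (fun x : ℝ => g x * Real.cos (u * x)) := by
  refine hg1.norm.mono' ?_ (Filter.Eventually.of_forall fun x => ?_)
  · exact hg1.aestronglyMeasurable.mul
      ((Real.continuous_cos.comp (continuous_const.mul continuous_id)).aestronglyMeasurable)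
  · rw [Real.norm_eq_abs, Real.norm_eq_abs, abs_mul]
    exact (mul_le_of_le_one_right (abs_nonneg _) (Real.abs_cos_le_one _))

lemma cp_re_w (hg1 : Integrable g) (u : ℝ) :
    (∫ x : ℝ, (g x : ℂ) * Complex.exp (-(Complex.I * u * x))).re
      = ∫ x : ℝ, g x * Real.cos (u * x) := by
  have h2 := integral_re (cp_integrand_integrable hg1 u)
  simp only [RCLike.re_to_complex] at h2
  rw [← h2]
  congr 1
  funext x
  have h1 : -(Complex.I * u * x) = ((-(u * x) : ℝ) : ℂ) * Complex.I := by
    push_cast; ring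
  rw [h1, Complex.re_ofReal_mul, Complex.exp_ofReal_mul_I_re, Real.cos_neg]

lemma cp_denom_re_pos (hg1 : Integrable g) (hgpos : ∀ᵐ x : ℝ, 0 ≤ g x)
    {M : ℝ} (hM : M = ∫ x : ℝ, g x) (hMpos : 0 < M) (u : ℝ) :
    0 < M + (∫ x : ℝ, (g x : ℂ) * Complex.exp (-(Complex.I * u * x))).re := by
  rw [cp_re_w hg1 u, hM, ← integral_add hg1 (cp_gcos_integrable hg1 u)]
  set h : ℝ → ℝ := fun x => g x + g x * Real.cos (u * x) with hh
  have hfact : ∀ x, h x = g x * (1 + Real.cos (u * x)) := fun x => by rw [hh]; ring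
  have hnonneg : 0 ≤ᵐ[volume] h := by
    filter_upwards [hgpos] with x hx
    rw [hfact x]
    have : 0 ≤ 1 + Real.cos (u * x) := by nlinarith [Real.neg_one_le_cos (u * x)]
    positivity
  have hint : Integrable h := hg1.add (cp_gcos_integrable hg1 u)
  have hne : ¬ (h =ᵐ[volume] 0) := by
    intro hzero
    -- derive g =ᵐ 0
    have hgzero : g =ᵐ[volume] 0 := by
      rcases eq_or_ne u 0 with hu | hu
      · filter_upwards [hzero] with x hx
        have hx0 : h x = 0 := by simpa using hx
        rw [hfact x, hu] at hx0
        simp only [zero_mul, Real.cos_zero] at hx0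
        have : g x = 0 := by
          rcases mul_eq_zero.mp hx0 with h | h
          · exact h
          · norm_num at h
        simpa using this
      · have hS : volume {x : ℝ | Real.cos (u * x) = -1} = 0 := by
          refine measure_mono_null ?_ ((Set.countable_range
            (fun k : ℤ => (π + k * (2 * π)) / u)).measure_zero _)
          intro x hx
          rcases Real.cos_eq_neg_one_iff.mp hx with ⟨k, hk⟩
          exact ⟨k, by field_simp; rw [← hk]; ring⟩
        have hSa : ∀ᵐ x : ℝ, Real.cos (u * x) ≠ -1 :=
          (ae_iff).2 (by simpa using hS)
        filter_upwards [hzero, hSa] with x hx hcos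
        have h0 : g x * (1 + Real.cos (u * x)) = 0 := by rw [← hfact x, hx]; rfl
        have hpos : 0 < 1 + Real.cos (u * x) := by
          rcases lt_or_eq_of_le (Real.neg_one_le_cos (u * x)) with h | h
          · linarith
          · exact absurd h.symm hcos
        have := mul_eq_zero.mp h0
        rcases this with h | h
        · exact h
        · linarith
    have : M = 0 := by
      rw [hM, integral_congr_ae hgzero]
      simp
    linarith
  have h0le : 0 ≤ ∫ x, h x := integral_nonneg_of_ae hnonneg
  rcases lt_or_eq_of_le h0le with h | h
  · exact h
  · exact absurd ((integral_eq_zero_iff_of_nonneg_ae hnonneg hint).mp h.symm) hne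

end CPAux

lemma cp_gauss_kernel {ε : ℝ} (hε : 0 < ε) (t : ℝ) :
    ∫ u : ℝ, Complex.exp (-(ε:ℂ) * u^2) * Complex.exp (-(Complex.I * t * u))
      = ((Real.sqrt (π/ε) * Real.exp (-(t^2/(4*ε))) : ℝ) : ℂ) := by
  have h := fourierIntegral_gaussian (b := (ε:ℂ)) (by simpa using hε) (-(t:ℂ))
  have hL : (∫ u : ℝ, Complex.exp (-(ε:ℂ) * u^2) * Complex.exp (-(Complex.I * t * u)))
      = ∫ x : ℝ, Complex.exp (Complex.I * (-(t:ℂ)) * x) * Complex.exp (-(ε:ℂ) * x^2) := by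
    congr 1; funext x; rw [mul_comm]; congr 2; ring
  rw [hL, h]
  have h1 : ((π:ℂ)/(ε:ℂ)) ^ (1/2 : ℂ) = ((Real.sqrt (π/ε) : ℝ) : ℂ) := by
    rw [show ((π:ℂ)/(ε:ℂ)) = ((π/ε : ℝ) : ℂ) by push_cast; ring]
    rw [show (1/2 : ℂ) = ((1/2 : ℝ) : ℂ) by norm_num]
    rw [← Complex.ofReal_cpow (by positivity) (1/2 : ℝ)]
    rw [Real.sqrt_eq_rpow]
  have h2 : Complex.exp (-(-(t:ℂ))^2 / (4 * (ε:ℂ))) = ((Real.exp (-(t^2/(4*ε))) : ℝ) : ℂ) := by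
    rw [Complex.ofReal_exp]
    congr 1
    push_cast
    ring
  rw [h1, h2, ← Complex.ofReal_mul]

lemma cp_double_rep (g : ℝ → ℝ) (hg1 : Integrable g) (u : ℝ) :
    (∫ x : ℝ, (g x : ℂ) * Complex.exp (-(Complex.I * u * x)))
      * (starRingEnd ℂ) (∫ x : ℝ, (g x : ℂ) * Complex.exp (-(Complex.I * u * x)))
    = ∫ p : ℝ × ℝ, (g p.1 : ℂ) * (g p.2 : ℂ)
        * Complex.exp (-(Complex.I * u * ((p.1 : ℂ) - (p.2 : ℂ)))) := by
  rw [← integral_conj]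
  have hconj : (fun x : ℝ => (starRingEnd ℂ) ((g x : ℂ) * Complex.exp (-(Complex.I * u * x))))
      = fun x : ℝ => (g x : ℂ) * Complex.exp (Complex.I * u * x) := by
    funext x
    rw [map_mul, Complex.conj_ofReal, ← Complex.exp_conj]
    congr 2
    simp
  rw [hconj, ← integral_prod_mul]
  rw [← Measure.volume_eq_prod]
  congr 1
  funext p
  rw [mul_mul_mul_comm, ← Complex.exp_add]
  congr 2
  ring

lemma cp_main_identity (g : ℝ → ℝ) (hg1 : Integrable g) {ε : ℝ} (hε : 0 < ε) :
    ∫ u : ℝ, Real.exp (-ε * u^2)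
        * ‖∫ x : ℝ, (g x : ℂ) * Complex.exp (-(Complex.I * u * x))‖^2
      = ∫ p : ℝ × ℝ, g p.1 * g p.2
          * (Real.sqrt (π/ε) * Real.exp (-((p.1 - p.2)^2/(4*ε)))) := by
  set w : ℝ → ℂ := fun u => ∫ x : ℝ, (g x : ℂ) * Complex.exp (-(Complex.I * u * x)) with hw
  set F : ℝ → (ℝ × ℝ) → ℂ := fun u p => Complex.exp (-(ε:ℂ) * u^2)
      * ((g p.1 : ℂ) * (g p.2 : ℂ) * Complex.exp (-(Complex.I * u * ((p.1:ℂ) - (p.2:ℂ)))))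
    with hF
  have hgC : AEStronglyMeasurable (fun x : ℝ => (g x : ℂ)) volume :=
    Complex.continuous_ofReal.comp_aestronglyMeasurable hg1.aestronglyMeasurable
  have hFint : Integrable (Function.uncurry F) (volume.prod volume) := by
    have hmeas : AEStronglyMeasurable (Function.uncurry F) (volume.prod volume) := by
      apply AEStronglyMeasurable.mul
      · apply Continuous.aestronglyMeasurable
        apply Complex.continuous_exp.comp
        fun_prop
      · apply AEStronglyMeasurable.mul
        · apply AEStronglyMeasurable.mul
          · exact AEStronglyMeasurable.comp_snd (AEStronglyMeasurable.comp_fst hgC)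
          · exact AEStronglyMeasurable.comp_snd (AEStronglyMeasurable.comp_snd hgC)
        · apply Continuous.aestronglyMeasurable
          apply Complex.continuous_exp.comp
          fun_prop
    have hbd : Integrable (fun z : ℝ × (ℝ × ℝ) =>
        Real.exp (-ε * z.1^2) * (|g z.2.1| * |g z.2.2|)) (volume.prod volume) :=
      (integrable_exp_neg_mul_sq hε).mul_prod (hg1.norm.mul_prod hg1.norm)
    refine hbd.mono' hmeas (Filter.Eventually.of_forall fun z => ?_)
    simp only [Function.uncurry, hF, norm_mul, Complex.norm_exp]
    have e1 : (-(ε:ℂ) * (z.1:ℂ)^2).re = -ε * z.1^2 := by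
      rw [show -(ε:ℂ) * (z.1:ℂ)^2 = ((-ε * z.1^2 : ℝ) : ℂ) by push_cast; ring,
        Complex.ofReal_re]
    have e2 : (-(Complex.I * z.1 * ((z.2.1:ℂ) - (z.2.2:ℂ)))).re = 0 := by
      simp [Complex.mul_re]
    rw [e1, e2]
    simp only [Complex.norm_real, Real.norm_eq_abs, Real.exp_zero, mul_one]
    exact le_refl _
  have key : (∫ u : ℝ, ((Real.exp (-ε * u^2) * ‖w u‖^2 : ℝ) : ℂ))
      = ∫ p : ℝ × ℝ, ((g p.1 * g p.2
          * (Real.sqrt (π/ε) * Real.exp (-((p.1 - p.2)^2/(4*ε)))) : ℝ) : ℂ) := by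
    calc ∫ u : ℝ, ((Real.exp (-ε * u^2) * ‖w u‖^2 : ℝ) : ℂ)
        = ∫ u : ℝ, ∫ p : ℝ × ℝ, F u p := by
          congr 1; funext u
          have h1 : ((Real.exp (-ε * u^2) * ‖w u‖^2 : ℝ) : ℂ)
              = Complex.exp (-(ε:ℂ) * u^2) * (w u * (starRingEnd ℂ) (w u)) := by
            have harg : ((-ε * u^2 : ℝ) : ℂ) = -(ε:ℂ) * (u:ℂ)^2 := by push_cast; ring
            rw [Complex.mul_conj, Complex.normSq_eq_norm_sq,
              Complex.ofReal_mul, Complex.ofReal_exp, harg]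
          rw [h1, hw]
          rw [cp_double_rep g hg1 u, ← integral_const_mul]
      _ = ∫ p : ℝ × ℝ, ∫ u : ℝ, F u p := by
          rw [← Measure.volume_eq_prod] at hFint
          exact integral_integral_swap hFint
      _ = ∫ p : ℝ × ℝ, ((g p.1 * g p.2
            * (Real.sqrt (π/ε) * Real.exp (-((p.1 - p.2)^2/(4*ε)))) : ℝ) : ℂ) := by
          congr 1; funext p
          have hint_eq : (∫ u : ℝ, F u p) = ((g p.1:ℂ)*(g p.2:ℂ))
              * ∫ u : ℝ, Complex.exp (-(ε:ℂ)*u^2)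
                * Complex.exp (-(Complex.I * ((p.1 - p.2 : ℝ):ℂ) * u)) := by
            rw [← integral_const_mul]
            congr 1; funext u
            simp only [hF]
            have harg : -(Complex.I * u * ((p.1:ℂ) - (p.2:ℂ)))
                = -(Complex.I * ((p.1 - p.2 : ℝ):ℂ) * u) := by push_cast; ring
            rw [harg]; ring
          rw [hint_eq, cp_gauss_kernel hε (p.1-p.2), ← Complex.ofReal_mul,
            ← Complex.ofReal_mul]
  rw [← RCLike.ofReal_inj (K := ℂ), ← integral_ofReal, ← integral_ofReal]
  exact key

lemma cp_shear1 {f k : ℝ → ℝ} (hf : Integrable f) (hk : Integrable k)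
    (hkeven : ∀ t : ℝ, k (-t) = k t) :
    Integrable (fun p : ℝ × ℝ => f p.1 * k (p.1 - p.2)) (volume : Measure (ℝ × ℝ)) ∧
    ∫ p : ℝ × ℝ, f p.1 * k (p.1 - p.2) = (∫ x, f x) * ∫ t, k t := by
  have hT : MeasurePreserving (fun z : ℝ × ℝ => (z.1, z.2 - z.1))
      (volume.prod volume) (volume.prod volume) := measurePreserving_prod_sub volume volume
  have hemb : MeasurableEmbedding (fun z : ℝ × ℝ => (z.1, z.2 - z.1)) :=
    (MeasurableEquiv.shearSubRight ℝ).measurableEmbedding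
  have hF0 : Integrable (fun q : ℝ × ℝ => f q.1 * k q.2) (volume.prod volume) :=
    hf.mul_prod hk
  have hfun : (fun p : ℝ × ℝ => f p.1 * k (p.1 - p.2))
      = (fun q : ℝ × ℝ => f q.1 * k q.2) ∘ (fun z : ℝ × ℝ => (z.1, z.2 - z.1)) := by
    funext z
    simp only [Function.comp_apply]
    rw [← hkeven (z.1 - z.2)]
    ring_nf
  constructor
  · rw [Measure.volume_eq_prod, hfun]
    exact (hT.integrable_comp_emb hemb).mpr hF0
  · rw [Measure.volume_eq_prod, hfun]
    exact (hT.integral_comp hemb (fun q : ℝ × ℝ => f q.1 * k q.2)).trans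
      (integral_prod_mul f k)

lemma cp_shear2 {f k : ℝ → ℝ} (hf : Integrable f) (hk : Integrable k) :
    Integrable (fun p : ℝ × ℝ => f p.2 * k (p.1 - p.2)) (volume : Measure (ℝ × ℝ)) ∧
    ∫ p : ℝ × ℝ, f p.2 * k (p.1 - p.2) = (∫ x, f x) * ∫ t, k t := by
  have hT : MeasurePreserving (fun z : ℝ × ℝ => (z.2, z.1 - z.2))
      (volume.prod volume) (volume.prod volume) := measurePreserving_prod_sub_swap volume volume
  have hemb : MeasurableEmbedding (fun z : ℝ × ℝ => (z.2, z.1 - z.2)) := by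
    have : (fun z : ℝ × ℝ => (z.2, z.1 - z.2))
        = (MeasurableEquiv.prodComm : ℝ × ℝ ≃ᵐ ℝ × ℝ).trans (MeasurableEquiv.shearSubRight ℝ) := by
      funext z; rfl
    rw [this]
    exact MeasurableEquiv.measurableEmbedding _
  have hF0 : Integrable (fun q : ℝ × ℝ => f q.1 * k q.2) (volume.prod volume) :=
    hf.mul_prod hk
  have hfun : (fun p : ℝ × ℝ => f p.2 * k (p.1 - p.2))
      = fun z : ℝ × ℝ => (fun q : ℝ × ℝ => f q.1 * k q.2) ((z.2, z.1 - z.2)) := rfl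
  constructor
  · rw [Measure.volume_eq_prod, hfun]
    exact (hT.integrable_comp_emb hemb).mpr hF0
  · rw [Measure.volume_eq_prod, hfun]
    exact (hT.integral_comp hemb (fun q : ℝ × ℝ => f q.1 * k q.2)).trans
      (integral_prod_mul f k)

lemma cp_kernel_integrable {ε : ℝ} (hε : 0 < ε) :
    Integrable (fun t : ℝ => Real.sqrt (π/ε) * Real.exp (-(t^2/(4*ε)))) := by
  have h : (fun t : ℝ => Real.sqrt (π/ε) * Real.exp (-(t^2/(4*ε))))
      = fun t : ℝ => Real.sqrt (π/ε) * Real.exp (-(1/(4*ε)) * t^2) := by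
    funext t; congr 1; congr 1; field_simp
  rw [h]
  exact (integrable_exp_neg_mul_sq (by positivity)).const_mul _

lemma cp_kernel_integral {ε : ℝ} (hε : 0 < ε) :
    ∫ t : ℝ, Real.sqrt (π/ε) * Real.exp (-(t^2/(4*ε))) = 2*π := by
  have h : (fun t : ℝ => Real.sqrt (π/ε) * Real.exp (-(t^2/(4*ε))))
      = fun t : ℝ => Real.sqrt (π/ε) * Real.exp (-(1/(4*ε)) * t^2) := by
    funext t; congr 1; congr 1; field_simp
  rw [h, integral_const_mul, integral_gaussian]
  rw [← Real.sqrt_mul (by positivity)]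
  rw [show (π/ε) * (π / (1/(4*ε))) = (2*π)^2 by field_simp; ring]
  exact Real.sqrt_sq (by positivity)

lemma cp_gauss_bound (g : ℝ → ℝ) (hg1 : Integrable g)
    (hg2sq : Integrable (fun x => g x^2)) {ε : ℝ} (hε : 0 < ε) :
    ∫ p : ℝ × ℝ, g p.1 * g p.2 * (Real.sqrt (π/ε) * Real.exp (-((p.1 - p.2)^2/(4*ε))))
      ≤ 2*π * (∫ x, g x^2) := by
  set k : ℝ → ℝ := fun t => Real.sqrt (π/ε) * Real.exp (-(t^2/(4*ε))) with hk
  have hknn : ∀ t, 0 ≤ k t := fun t => by rw [hk]; positivity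
  have hkb : ∀ t, k t ≤ Real.sqrt (π/ε) := fun t => by
    rw [hk]
    simp only
    nlinarith [Real.exp_le_one_iff.mpr (show -(t^2/(4*ε)) ≤ 0 from neg_nonpos.mpr (by positivity)),
      Real.sqrt_nonneg (π/ε), Real.exp_pos (-(t^2/(4*ε)))]
  have hkeven : ∀ t : ℝ, k (-t) = k t := fun t => by rw [hk]; simp [neg_sq]
  have hkint : Integrable k := cp_kernel_integrable hε
  have hS1 := cp_shear1 hg2sq hkint hkeven
  have hS2 := cp_shear2 hg2sq hkint
  -- integrability of LHS
  have hLint : Integrable (fun p : ℝ × ℝ => g p.1 * g p.2 * k (p.1 - p.2))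
      (volume : Measure (ℝ × ℝ)) := by
    have hmaj : Integrable (fun p : ℝ × ℝ => |g p.1| * |g p.2| * Real.sqrt (π/ε))
        (volume : Measure (ℝ × ℝ)) := by
      rw [Measure.volume_eq_prod]
      exact (hg1.norm.mul_prod hg1.norm).mul_const _
    refine hmaj.mono' ?_ (Filter.Eventually.of_forall fun p => ?_)
    · refine AEStronglyMeasurable.mul (AEStronglyMeasurable.mul ?_ ?_) ?_
      · rw [Measure.volume_eq_prod]; exact hg1.aestronglyMeasurable.comp_fst
      · rw [Measure.volume_eq_prod]; exact hg1.aestronglyMeasurable.comp_snd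
      · apply Continuous.aestronglyMeasurable; fun_prop
    · rw [Real.norm_eq_abs, abs_mul, abs_mul]
      rw [_root_.abs_of_nonneg (hknn _)]
      have := hkb (p.1 - p.2)
      have h1 : (0:ℝ) ≤ |g p.1| * |g p.2| := by positivity
      exact mul_le_mul_of_nonneg_left this h1
  have hmaj2 : Integrable
      (fun p : ℝ × ℝ => (g p.1^2 * k (p.1 - p.2) + g p.2^2 * k (p.1 - p.2))/2)
      (volume : Measure (ℝ × ℝ)) := (hS1.1.add hS2.1).div_const 2
  have hle : ∀ p : ℝ × ℝ, g p.1 * g p.2 * k (p.1 - p.2)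
      ≤ (g p.1^2 * k (p.1 - p.2) + g p.2^2 * k (p.1 - p.2))/2 := by
    intro p
    nlinarith [sq_nonneg (g p.1 - g p.2), hknn (p.1 - p.2)]
  calc ∫ p : ℝ × ℝ, g p.1 * g p.2 * k (p.1 - p.2)
      ≤ ∫ p : ℝ × ℝ, (g p.1^2 * k (p.1 - p.2) + g p.2^2 * k (p.1 - p.2))/2 :=
        integral_mono hLint hmaj2 hle
    _ = ((∫ x, g x^2) * (∫ t, k t) + (∫ x, g x^2) * (∫ t, k t))/2 := by
        rw [integral_div, integral_add hS1.1 hS2.1, hS1.2, hS2.2]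
    _ = 2*π * (∫ x, g x^2) := by
        rw [cp_kernel_integral hε]
        ring

lemma cp_w_memLp (g : ℝ → ℝ) (hg1 : Integrable g) (hg2 : MemLp g 2 (volume : Measure ℝ)) :
    MemLp (fun u : ℝ => ∫ x : ℝ, (g x : ℂ) * Complex.exp (-(Complex.I * u * x))) 2
      (volume : Measure ℝ) := by
  set w : ℝ → ℂ := fun u => ∫ x : ℝ, (g x : ℂ) * Complex.exp (-(Complex.I * u * x)) with hw
  have hwc : Continuous w := cp_w_continuous hg1
  have hg2sq : Integrable (fun x => g x^2) :=
    (memLp_two_iff_integrable_sq hg2.aestronglyMeasurable).mp hg2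
  rw [memLp_two_iff_integrable_sq_norm hwc.aestronglyMeasurable]
  refine ⟨(hwc.norm.pow 2).aestronglyMeasurable, ?_⟩
  rw [hasFiniteIntegral_iff_ofReal (Filter.Eventually.of_forall fun u => by positivity)]
  -- the approximating sequence
  set φ : ℕ → ℝ → ℝ := fun n u => Real.exp (-(1/(n+1 : ℝ)) * u^2) * ‖w u‖^2 with hφ
  have hφnn : ∀ n u, 0 ≤ φ n u := fun n u => by rw [hφ]; positivity
  have hφcont : ∀ n, Continuous (φ n) := fun n => by
    apply Continuous.mul ?_ (hwc.norm.pow 2)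
    exact Real.continuous_exp.comp (by fun_prop)
  have hεpos : ∀ n : ℕ, (0:ℝ) < 1/(n+1 : ℝ) := fun n => by positivity
  have hφint : ∀ n, Integrable (φ n) := by
    intro n
    have B := ∫ x : ℝ, |g x|
    refine (((integrable_exp_neg_mul_sq (hεpos n)).const_mul
        ((∫ x : ℝ, |g x|)^2)).mono' (hφcont n).aestronglyMeasurable
        (Filter.Eventually.of_forall fun u => ?_))
    rw [Real.norm_eq_abs, _root_.abs_of_nonneg (hφnn n u), hφ]
    simp only
    rw [mul_comm ((∫ x : ℝ, |g x|)^2) _]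
    apply mul_le_mul_of_nonneg_left _ (le_of_lt (Real.exp_pos _))
    have h1 := cp_norm_w_le hg1 u
    have h2 : (0:ℝ) ≤ ‖w u‖ := norm_nonneg _
    nlinarith
  have hφle : ∀ n, ∫ u, φ n u ≤ 2*π * (∫ x, g x^2) := fun n =>
    (cp_main_identity g hg1 (hεpos n)).le.trans (cp_gauss_bound g hg1 hg2sq (hεpos n))
  -- monotone convergence
  have hmono : Monotone (fun n => fun u => ENNReal.ofReal (φ n u)) := by
    intro n m hnm
    intro u
    apply ENNReal.ofReal_le_ofReal
    rw [hφ]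
    simp only
    apply mul_le_mul_of_nonneg_right _ (by positivity)
    apply Real.exp_le_exp.mpr
    have : (1:ℝ)/(m+1) ≤ 1/(n+1) := by
      apply one_div_le_one_div_of_le (by positivity)
      linarith [(Nat.cast_le (α := ℝ)).mpr hnm]
    nlinarith [sq_nonneg u]
  have hsup : ∀ u, (⨆ n, ENNReal.ofReal (φ n u)) = ENNReal.ofReal (‖w u‖^2) := by
    intro u
    apply iSup_eq_of_tendsto
    · exact fun n m hnm => hmono hnm u
    · apply ENNReal.tendsto_ofReal
      have h0 : Tendsto (fun n : ℕ => -(1/(n+1 : ℝ)) * u^2) atTop (nhds 0) := by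
        have := tendsto_one_div_add_atTop_nhds_zero_nat (𝕜 := ℝ)
        have := (this.neg).mul_const (u^2)
        simpa using this
      have h1 : Tendsto (fun n : ℕ => Real.exp (-(1/(n+1 : ℝ)) * u^2)) atTop (nhds 1) := by
        have := (Real.continuous_exp.tendsto 0).comp h0
        simpa [Function.comp_def] using this
      have h2 := h1.mul_const (‖w u‖^2)
      simpa only [one_mul] using h2
  calc ∫⁻ u, ENNReal.ofReal (‖w u‖^2)
      = ∫⁻ u, ⨆ n, ENNReal.ofReal (φ n u) := by
        apply lintegral_congr
        intro u
        exact (hsup u).symm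
    _ = ⨆ n, ∫⁻ u, ENNReal.ofReal (φ n u) := by
        apply lintegral_iSup
        · exact fun n => ((hφcont n).measurable).ennreal_ofReal
        · exact hmono
    _ ≤ ENNReal.ofReal (2*π * (∫ x, g x^2)) := by
        apply iSup_le
        intro n
        rw [← ofReal_integral_eq_lintegral_ofReal (hφint n)
          (Filter.Eventually.of_forall (hφnn n))]
        exact ENNReal.ofReal_le_ofReal (hφle n)
    _ < ⊤ := ENNReal.ofReal_lt_top

/-- **Formulas (3.4)–(3.7)** (Sakhnovich, "Levy Processes, Generators").
For a nonnegative Lévy density `g ∈ L¹ ∩ L²` with total mass `M = ∫ g > 0`,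
`K(u) = -(1/(M√(2π))) ∫ g(x) e^{-iux} dx` and `N(u) = K(u)/(1 - √(2π) K(u))`, the
denominator `1 - √(2π) K(u)` never vanishes, `N` is bounded, and `N ∈ L²(ℝ)`. -/
theorem compound_poisson_potential_symbol_properties
    (g : ℝ → ℝ) (hg1 : Integrable g) (hg2 : MemLp g 2 (volume : Measure ℝ))
    (hgpos : ∀ᵐ x : ℝ, 0 ≤ g x)
    (M : ℝ) (hM : M = ∫ x : ℝ, g x) (hMpos : 0 < M)
    (K N : ℝ → ℂ)
    (hK : ∀ u : ℝ, K u = (-(1 / (M * Real.sqrt (2 * Real.pi))) : ℝ) *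
      ∫ x : ℝ, (g x : ℂ) * Complex.exp (-(Complex.I * (u : ℂ) * (x : ℂ))))
    (hN : ∀ u : ℝ, N u = K u / (1 - (Real.sqrt (2 * Real.pi) : ℂ) * K u)) :
    (∀ u : ℝ, (1 : ℂ) - (Real.sqrt (2 * Real.pi) : ℂ) * K u ≠ 0) ∧
    (∃ C : ℝ, ∀ u : ℝ, ‖N u‖ ≤ C) ∧
    MemLp N 2 (volume : Measure ℝ) := by

  have hMne : M ≠ 0 := ne_of_gt hMpos
  have hsq : (0:ℝ) < Real.sqrt (2*π) := Real.sqrt_pos.mpr (by positivity)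
  have hsqne : Real.sqrt (2*π) ≠ 0 := ne_of_gt hsq
  set w : ℝ → ℂ := fun u => ∫ x : ℝ, (g x : ℂ) * Complex.exp (-(Complex.I * u * x)) with hw
  -- denominator identity
  have hdenom : ∀ u : ℝ, (1 : ℂ) - (Real.sqrt (2*π) : ℂ) * K u
      = 1 + ((1/M : ℝ) : ℂ) * w u := by
    intro u
    rw [hK u]
    have hreal : Real.sqrt (2*π) * (-(1 / (M * Real.sqrt (2*π)))) = -(1/M) := by
      field_simp
    have : (Real.sqrt (2*π) : ℂ) * ((-(1 / (M * Real.sqrt (2*π))) : ℝ) : ℂ)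
        = ((-(1/M) : ℝ) : ℂ) := by
      rw [← Complex.ofReal_mul, hreal]
    rw [← mul_assoc, this]
    push_cast
    ring
  -- positivity of real part of denominator
  have hre : ∀ u : ℝ, 0 < ((1 : ℂ) + ((1/M : ℝ) : ℂ) * w u).re := by
    intro u
    rw [Complex.add_re, Complex.one_re, Complex.re_ofReal_mul]
    have h1 := cp_denom_re_pos hg1 hgpos hM hMpos u
    have : 1 + 1/M * (w u).re = (M + (w u).re)/M := by field_simp
    rw [this]
    positivity
  have hne : ∀ u : ℝ, (1 : ℂ) - (Real.sqrt (2*π) : ℂ) * K u ≠ 0 := by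
    intro u h
    rw [hdenom u] at h
    have := hre u
    rw [h] at this
    simp at this
  refine ⟨hne, ?_, ?_⟩
  all_goals {
    -- common setup for bounds
    have hwc : Continuous w := cp_w_continuous hg1
    have hB : ∫ x : ℝ, |g x| = M := by
      rw [hM]
      apply integral_congr_ae
      filter_upwards [hgpos] with x hx
      exact _root_.abs_of_nonneg hx
    have hKabs : ∀ u : ℝ, ‖K u‖ ≤ 1 / Real.sqrt (2*π) := by
      intro u
      rw [hK u]
      rw [norm_mul, Complex.norm_real, Real.norm_eq_abs, abs_neg, abs_div, abs_one,
        _root_.abs_of_pos (by positivity : (0:ℝ) < M * Real.sqrt (2*π))]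
      have h1 := cp_norm_w_le hg1 u
      rw [hB] at h1
      calc 1 / (M * Real.sqrt (2*π)) * ‖w u‖
          ≤ 1 / (M * Real.sqrt (2*π)) * M := by
            apply mul_le_mul_of_nonneg_left h1 (by positivity)
        _ = 1 / Real.sqrt (2*π) := by field_simp
    -- lower bound for |denominator|
    have hD : ∃ δ : ℝ, 0 < δ ∧ ∀ u : ℝ,
        δ ≤ ‖(1 : ℂ) + ((1/M : ℝ) : ℂ) * w u‖ := by
      set D : ℝ → ℝ := fun u => ‖(1 : ℂ) + ((1/M : ℝ) : ℂ) * w u‖ with hDdef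
      have hDc : Continuous D :=
        continuous_norm.comp (continuous_const.add (continuous_const.mul hwc))
      have hDpos : ∀ u, 0 < D u := by
        intro u
        rw [hDdef]
        apply norm_pos_iff.mpr
        intro h
        have := hre u
        rw [h] at this
        simp at this
      have hDt : Tendsto D (cocompact ℝ) (nhds 1) := by
        have h1 : Tendsto (fun u => (1 : ℂ) + ((1/M : ℝ) : ℂ) * w u) (cocompact ℝ)
            (nhds (1 + ((1/M : ℝ) : ℂ) * 0)) :=
          tendsto_const_nhds.add (tendsto_const_nhds.mul (cp_w_tendsto hg1))
        have h2 := (continuous_norm.tendsto _).comp h1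
        have h3 : ‖(1 : ℂ) + ((1/M : ℝ) : ℂ) * 0‖ = 1 := by simp
        rw [h3] at h2
        exact h2
      have hev : ∀ᶠ u in cocompact ℝ, 1/2 ≤ D u :=
        hDt.eventually (eventually_ge_nhds (by norm_num))
      rw [Filter.hasBasis_cocompact.eventually_iff] at hev
      obtain ⟨S, hScomp, hS⟩ := hev
      have hS0 : IsCompact (S ∪ {0}) := hScomp.union isCompact_singleton
      obtain ⟨u₀, _, hu₀⟩ := hS0.exists_isMinOn ⟨0, Or.inr rfl⟩ hDc.continuousOn
      refine ⟨min (1/2) (D u₀), lt_min (by norm_num) (hDpos u₀), fun u => ?_⟩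
      by_cases hu : u ∈ S ∪ {0}
      · exact (min_le_right _ _).trans (hu₀ hu)
      · exact (min_le_left _ _).trans (hS (show u ∈ Sᶜ from fun h => hu (Or.inl h)))
    obtain ⟨δ, hδpos, hδ⟩ := hD
    first
    | · -- boundedness
        refine ⟨(1 / Real.sqrt (2*π)) / δ, fun u => ?_⟩
        rw [hN u, norm_div]
        have hd := hδ u
        rw [← hdenom u] at hd
        apply div_le_div₀ (by positivity) (hKabs u) hδpos hd
    | · -- Memℒp
        have hNeq : N = fun u => K u / ((1 : ℂ) - (Real.sqrt (2*π) : ℂ) * K u) :=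
          funext hN
        have hNc : Continuous N := by
          rw [hNeq]
          apply Continuous.div
          · have : Continuous (fun u : ℝ => ((-(1 / (M * Real.sqrt (2*π))) : ℝ) : ℂ) * w u) :=
              continuous_const.mul hwc
            have heq : K = fun u : ℝ => ((-(1 / (M * Real.sqrt (2*π))) : ℝ) : ℂ) * w u :=
              funext hK
            rw [heq]; exact this
          · apply continuous_const.sub
            apply continuous_const.mul
            have heq : K = fun u : ℝ => ((-(1 / (M * Real.sqrt (2*π))) : ℝ) : ℂ) * w u :=
              funext hK
            rw [heq]; exact continuous_const.mul hwc
          · exact hne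
        refine MemLp.of_le_mul (cp_w_memLp g hg1 hg2) hNc.aestronglyMeasurable
          (c := (1 / (M * Real.sqrt (2*π))) / δ)
          (Filter.Eventually.of_forall fun u => ?_)
        rw [hN u]
        rw [norm_div]
        have hd := hδ u
        rw [← hdenom u] at hd
        have hKw : ‖K u‖ = 1 / (M * Real.sqrt (2*π)) * ‖w u‖ := by
          rw [hK u, norm_mul, Complex.norm_real, Real.norm_eq_abs, abs_neg, abs_div, abs_one,
            _root_.abs_of_pos (by positivity : (0:ℝ) < M * Real.sqrt (2*π))]
        rw [hKw]
        have hWw : ‖∫ x : ℝ, (g x : ℂ) * Complex.exp (-(Complex.I * u * x))‖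
            = ‖w u‖ := rfl
        rw [hWw]
        have key : ∀ a W Dd : ℝ, 0 ≤ W → δ ≤ Dd → 0 ≤ a → a * W / Dd ≤ a / δ * W := by
          intro a W Dd hW hDd ha
          rw [div_mul_eq_mul_div]
          exact div_le_div₀ (by positivity) (le_refl _) hδpos hDd
        exact key _ _ _ (norm_nonneg _) hd (by positivity)
  }
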